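/- Let (P_n) be a monic orthogonal polynomial sequence satisfying P_{n+1}(x) = (x - β_n)P_n(x) - γ_n P_{n-1}(x) with γ_n ≠ 0 for n ≥ 1, and define R_n := P_n + Σ_{i=1}^N r_{i,n} P_{n-i} with r_{i,n} = 0 for i > n and r_{N,n} ≠ 0 for all n ≥ N. Set β*_n := β_n + r_{1,n} - r_{1,n+1} and γ*_n := γ_n + r_{1,n}(β_{n-1} - β*_n) + r_{2,n} - r_{2,n+1}. Then (R_n) satisfies R_{n+1}(x) = (x - β*_n)R_n(x) - γ*_n R_{n-1}(x) with γ*_n ≠ 0 for all n ≥ 1 (hence is a MOPS by Favard's theorem) if and only if γ*_i ≠ 0 for i = 1, …, N and A_{i,n} = 0 for all n ≥ i, 2 ≤ i ≤ N-1, A_{N,n} = 0 for n ≥ N (when N ≥ 2), and A_{N+1,n} = 0 for n ≥ N+1, where A_{i,n} := r_{i+1,n+1} - r_{i+1,n} + r_{i,n}(β*_n - β_{n-i}) + r_{i-1,n-1}γ*_n - r_{i-1,n}γ_{n+1-i}, A_{N,n} := r_{N,n}(β*_n - β_{n-N}) + r_{N-1,n-1}γ*_n - r_{N-1,n}γ_{n+1-N},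 and A_{N+1,n} := r_{N,n-1}γ*_n - r_{N,n}γ_{n-N}. -/

import Mathlib

open Polynomial

lemma shift_sum (f : ℕ → Polynomial ℂ) (a b k a' b' : ℕ) (ha : a' = a + k) (hb : b' = b + k) :
    ∑ j ∈ Finset.Icc a' b', f j = ∑ i ∈ Finset.Icc a b, f (i + k) := by
  subst ha hb
  rw [← Finset.map_add_right_Icc, Finset.sum_map]
  rfl

lemma aux_monic {β γ : ℕ → ℂ} {P : ℕ → Polynomial ℂ}
    (hP0 : P 0 = 1) (hP1 : P 1 = X - C (β 0))
    (hPrec : ∀ n, 1 ≤ n → P (n + 1) = (X - C (β n)) * P n - C (γ n) * P (n - 1)) :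
    ∀ k, (P k).Monic ∧ (P k).natDegree = k := by
  intro k
  induction k using Nat.strong_induction_on with
  | _ k ih =>
    match k with
    | 0 => simp [hP0, monic_one]
    | 1 => simp [hP1, monic_X_sub_C, natDegree_X_sub_C]
    | (k+2) =>
      obtain ⟨hm1, hd1⟩ := ih (k+1) (by omega)
      obtain ⟨hm0, hd0⟩ := ih k (by omega)
      have hrec := hPrec (k+1) (by omega)
      simp only [Nat.add_sub_cancel] at hrec
      have hq : ((X - C (β (k+1))) * P (k+1)).Monic := (monic_X_sub_C _).mul hm1
      have hqd : ((X - C (β (k+1))) * P (k+1)).natDegree = k + 2 := by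
        rw [natDegree_mul (monic_X_sub_C _).ne_zero hm1.ne_zero, natDegree_X_sub_C, hd1]
        ring
      have hdlt : (C (γ (k+1)) * P k).degree < ((X - C (β (k+1))) * P (k+1)).degree := by
        apply lt_of_le_of_lt (degree_mul_le _ _)
        rw [degree_eq_natDegree hq.ne_zero, hqd]
        apply lt_of_le_of_lt (add_le_add degree_C_le degree_le_natDegree)
        rw [hd0]
        simp only [zero_add]
        exact_mod_cast WithBot.coe_lt_coe.mpr (by omega)
      rw [hrec, sub_eq_add_neg]
      constructor
      · exact hq.add_of_left (by rwa [degree_neg])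
      · have := degree_add_eq_left_of_degree_lt (p := (X - C (β (k+1))) * P (k+1))
          (q := -(C (γ (k+1)) * P k)) (by rwa [degree_neg])
        rw [natDegree_eq_of_degree_eq this, hqd]

lemma aux_indep {n : ℕ} {P : ℕ → Polynomial ℂ} (hP : ∀ k, (P k).Monic ∧ (P k).natDegree = k) :
    ∀ s : Finset ℕ, (∀ i ∈ s, i ≤ n) → ∀ c : ℕ → ℂ,
      (∑ i ∈ s, c i • P (n - i)) = 0 → ∀ i ∈ s, c i = 0 := by
  intro s
  induction s using Finset.strongInduction with
  | _ s ih =>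
    intro hs c hsum i hi
    have hne : s.Nonempty := ⟨i, hi⟩
    set m := s.min' hne with hm
    have hms : m ∈ s := s.min'_mem hne
    have hcm : c m = 0 := by
      have h := congrArg (fun p => Polynomial.coeff p (n - m)) hsum
      simp only [finset_sum_coeff, coeff_smul, coeff_zero, smul_eq_mul] at h
      rw [Finset.sum_eq_single m] at h
      · rwa [show (P (n-m)).coeff (n-m) = 1 by
            have := (hP (n-m)).1.coeff_natDegree; rwa [(hP (n-m)).2] at this,
          mul_one] at h
      · intro b hb hbm
        have hmb : m < b := lt_of_le_of_ne (s.min'_le b hb) (Ne.symm hbm)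
        have : (P (n-b)).coeff (n-m) = 0 := by
          apply coeff_eq_zero_of_natDegree_lt
          rw [(hP (n-b)).2]
          have := hs b hb
          omega
        rw [this, mul_zero]
      · intro h; exact absurd hms h
    rcases eq_or_ne i m with rfl | hne'
    · exact hcm
    · have herase : (∑ j ∈ s.erase m, c j • P (n - j)) = 0 := by
        rw [← Finset.add_sum_erase _ _ hms] at hsum
        rw [hcm, zero_smul, zero_add] at hsum
        exact hsum
      exact ih (s.erase m) (Finset.erase_ssubset hms)
        (fun j hj => hs j (Finset.mem_of_mem_erase hj)) c herase i
        (Finset.mem_erase.mpr ⟨hne', hi⟩)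

theorem orthogonality_characterization_Rn
    (N : ℕ) (hN : 1 ≤ N)
    (β γ βs γs : ℕ → ℂ) (r : ℕ → ℕ → ℂ)
    (P R : ℕ → Polynomial ℂ)
    (hP0 : P 0 = 1) (hP1 : P 1 = X - C (β 0))
    (hPrec : ∀ n, 1 ≤ n → P (n + 1) = (X - C (β n)) * P n - C (γ n) * P (n - 1))
    (hγ : ∀ n, 1 ≤ n → γ n ≠ 0)
    (hr0 : ∀ n, r 0 n = 1)
    (hrz : ∀ i n, n < i → r i n = 0)
    (hrN : ∀ i n, N < i → r i n = 0)
    (hrNne : ∀ n, N ≤ n → r N n ≠ 0)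
    (hR : ∀ n, R n = P n + ∑ i ∈ Finset.Icc 1 N, r i n • P (n - i))
    (hβs : ∀ n, βs n = β n + r 1 n - r 1 (n + 1))
    (hγs : ∀ n, 1 ≤ n → γs n = γ n + r 1 n * (β (n - 1) - βs n) + r 2 n - r 2 (n + 1))
    (A : ℕ → ℕ → ℂ)
    (hA : ∀ i n, A i n = r (i + 1) (n + 1) - r (i + 1) n + r i n * (βs n - β (n - i))
        + r (i - 1) (n - 1) * γs n - r (i - 1) n * γ (n + 1 - i)) :
    ((R 1 = (X - C (βs 0)) * R 0 ∧
        (∀ n, 1 ≤ n → R (n + 1) = (X - C (βs n)) * R n - C (γs n) * R (n - 1))) ∧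
      (∀ n, 1 ≤ n → γs n ≠ 0))
    ↔ ((∀ i ∈ Finset.Icc 1 N, γs i ≠ 0) ∧
       (∀ i n, 2 ≤ i → i ≤ N - 1 → i ≤ n → A i n = 0) ∧
       (2 ≤ N → ∀ n, N ≤ n → A N n = 0) ∧
       (∀ n, N + 1 ≤ n → A (N + 1) n = 0)) := by
  classical
  have hPm := aux_monic hP0 hP1 hPrec
  have hR' : ∀ m, R m = ∑ i ∈ Finset.Icc 0 N, r i m • P (m - i) := by
    intro m
    rw [hR m, show Finset.Icc 0 N = insert 0 (Finset.Icc 1 N) by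
      ext x; simp only [Finset.mem_Icc, Finset.mem_insert]; omega]
    rw [Finset.sum_insert (by simp)]
    simp [hr0]
  -- base case, unconditional
  have hR0 : R 0 = P 0 := by
    rw [hR 0, Finset.sum_eq_zero, add_zero]
    intro i hi
    simp only [Finset.mem_Icc] at hi
    rw [hrz i 0 (by omega), zero_smul]
  have hR1 : R 1 = P 1 + r 1 1 • P 0 := by
    rw [hR 1, Finset.sum_eq_single 1]
    · intro b hb hb1
      simp only [Finset.mem_Icc] at hb
      rw [hrz b 1 (by omega), zero_smul]
    · intro h; simp only [Finset.mem_Icc] at h; omega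
  have hbase : R 1 = (X - C (βs 0)) * R 0 := by
    rw [hR0, hR1, hP0, hP1, hβs 0, hrz 1 0 (by norm_num)]
    simp only [smul_eq_C_mul, map_sub, map_add, map_zero, mul_one]
    ring
  -- extension helper
  have hext : ∀ (g : ℕ → Polynomial ℂ) (a b : ℕ), b ≤ N + 2 →
      (∀ j ∈ Finset.Icc 0 (N+2), j ∉ Finset.Icc a b → g j = 0) →
      ∑ j ∈ Finset.Icc a b, g j = ∑ j ∈ Finset.Icc 0 (N+2), g j := by
    intro g a b hb hg
    exact Finset.sum_subset (fun x hx => by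
      simp only [Finset.mem_Icc] at *; omega) hg
  -- key identity
  have key : ∀ n, 1 ≤ n →
      R (n+1) - (X - C (βs n)) * R n + C (γs n) * R (n-1)
        = ∑ i ∈ Finset.Icc 1 (min (N+1) n), A i n • P (n - i) := by
    intro n hn
    have e1 : R (n+1) = ∑ j ∈ Finset.Icc 0 (N+2),
        (if j ≤ N then r j (n+1) else 0) • P (n+1-j) := by
      rw [hR' (n+1), ← hext _ 0 N (by omega) (fun j hj hj2 => by
        simp only [Finset.mem_Icc] at hj hj2
        rw [if_neg (by omega), zero_smul])]
      exact Finset.sum_congr rfl (fun j hj => by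
        simp only [Finset.mem_Icc] at hj
        rw [if_pos hj.2])
    have hterm : ∀ i ∈ Finset.Icc 0 N, (X - C (βs n)) * (r i n • P (n-i))
        = r i n • P (n+1-i) + (r i n * (β (n-i) - βs n)) • P (n-i)
          + (if i+1 ≤ n then r i n * γ (n-i) else 0) • P (n-1-i) := by
      intro i _
      by_cases hin : i ≤ n
      · by_cases hin1 : i + 1 ≤ n
        · have hrec := hPrec (n-i) (by omega)
          rw [show n - i + 1 = n + 1 - i by omega, show n - i - 1 = n - 1 - i by omega] at hrec
          rw [if_pos hin1]
          simp only [smul_eq_C_mul, map_mul, map_sub]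
          linear_combination (-C (r i n)) * hrec
        · rw [if_neg hin1, show n - i = 0 by omega, show n + 1 - i = 1 by omega, hP0, hP1]
          simp only [smul_eq_C_mul, map_mul, map_sub, map_zero, mul_one, zero_mul]
          ring
      · rw [hrz i n (by omega)]
        simp
    have e2 : (X - C (βs n)) * R n
        = (∑ j ∈ Finset.Icc 0 (N+2), (if j ≤ N then r j n else 0) • P (n+1-j))
        + (∑ j ∈ Finset.Icc 0 (N+2), (if 1 ≤ j ∧ j ≤ N+1 then r (j-1) n * (β (n-(j-1)) - βs n) else 0) • P (n+1-j))
        + (∑ j ∈ Finset.Icc 0 (N+2), (if 2 ≤ j ∧ j ≤ N+2 ∧ j ≤ n+1 then r (j-2) n * γ (n-(j-2)) else 0) • P (n+1-j)) := by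
      rw [hR' n, Finset.mul_sum, Finset.sum_congr rfl hterm,
        Finset.sum_add_distrib, Finset.sum_add_distrib]
      congr 1
      · congr 1
        · rw [← hext _ 0 N (by omega) (fun j hj hj2 => by
            simp only [Finset.mem_Icc] at hj hj2
            rw [if_neg (by omega), zero_smul])]
          exact Finset.sum_congr rfl (fun j hj => by
            simp only [Finset.mem_Icc] at hj
            rw [if_pos hj.2])
        · rw [← hext _ 1 (N+1) (by omega) (fun j hj hj2 => by
            simp only [Finset.mem_Icc] at hj hj2
            rw [if_neg (by omega), zero_smul])]
          rw [shift_sum _ 0 N 1 1 (N+1) rfl rfl]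
          refine Finset.sum_congr rfl (fun i hi => ?_)
          simp only [Finset.mem_Icc] at hi
          rw [if_pos (by omega), Nat.add_sub_cancel, Nat.succ_sub_succ]
      · rw [← hext _ 2 (N+2) (by omega) (fun j hj hj2 => by
          simp only [Finset.mem_Icc] at hj hj2
          rw [if_neg (by omega), zero_smul])]
        rw [shift_sum _ 0 N 2 2 (N+2) rfl rfl]
        refine Finset.sum_congr rfl (fun i hi => ?_)
        simp only [Finset.mem_Icc] at hi
        rw [show i + 2 - 2 = i by omega, show n + 1 - (i + 2) = n - 1 - i by omega]
        by_cases hc : i + 1 ≤ n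
        · rw [if_pos (by omega), if_pos (by omega)]
        · rw [if_neg (by omega), if_neg (by omega)]
    have e3 : C (γs n) * R (n-1) = ∑ j ∈ Finset.Icc 0 (N+2),
        (if 2 ≤ j ∧ j ≤ N+2 then γs n * r (j-2) (n-1) else 0) • P (n+1-j) := by
      rw [hR' (n-1), Finset.mul_sum]
      rw [← hext _ 2 (N+2) (by omega) (fun j hj hj2 => by
        simp only [Finset.mem_Icc] at hj hj2
        rw [if_neg (by omega), zero_smul])]
      rw [shift_sum _ 0 N 2 2 (N+2) rfl rfl]
      refine Finset.sum_congr rfl (fun i hi => ?_)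
      simp only [Finset.mem_Icc] at hi
      rw [if_pos (by omega), show i + 2 - 2 = i by omega,
        show n + 1 - (i + 2) = n - 1 - i by omega]
      simp [smul_eq_C_mul, map_mul]
      ring
    have eA : ∑ i ∈ Finset.Icc 1 (min (N+1) n), A i n • P (n-i)
        = ∑ j ∈ Finset.Icc 0 (N+2),
          (if 2 ≤ j ∧ j ≤ min (N+1) n + 1 then A (j-1) n else 0) • P (n+1-j) := by
      rw [← hext _ 2 (min (N+1) n + 1) (by omega) (fun j hj hj2 => by
        simp only [Finset.mem_Icc] at hj hj2
        have hcnd : ¬(2 ≤ j ∧ j ≤ min (N+1) n + 1) := by omega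
        rw [if_neg hcnd, zero_smul])]
      rw [shift_sum _ 1 (min (N+1) n) 1 2 (min (N+1) n + 1) rfl rfl]
      refine Finset.sum_congr rfl (fun i hi => ?_)
      simp only [Finset.mem_Icc] at hi
      have hcnd : 2 ≤ i + 1 ∧ i + 1 ≤ min (N+1) n + 1 := by omega
      rw [if_pos hcnd, Nat.add_sub_cancel, Nat.succ_sub_succ]
    -- pointwise coefficient identity
    have hco : ∀ j ∈ Finset.Icc 0 (N+2),
        (if j ≤ N then r j (n+1) else 0)
        - ((if j ≤ N then r j n else 0)
           + (if 1 ≤ j ∧ j ≤ N+1 then r (j-1) n * (β (n-(j-1)) - βs n) else 0)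
           + (if 2 ≤ j ∧ j ≤ N+2 ∧ j ≤ n+1 then r (j-2) n * γ (n-(j-2)) else 0))
        + (if 2 ≤ j ∧ j ≤ N+2 then γs n * r (j-2) (n-1) else 0)
        = (if 2 ≤ j ∧ j ≤ min (N+1) n + 1 then A (j-1) n else 0) := by
      have hif1 : ∀ j m, (if j ≤ N then r j m else 0) = r j m := by
        intro j m
        split
        · rfl
        · exact (hrN j m (by omega)).symm
      intro j hj
      simp only [Finset.mem_Icc] at hj
      match j, hj with
      | 0, _ => simp [hr0]
      | 1, _ =>
        rw [hif1, hif1, if_pos (by omega), if_neg (by omega), if_neg (by omega),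
          if_neg (by omega)]
        simp only [Nat.sub_self, Nat.sub_zero, hr0, hβs n]
        ring
      | (j+2), hj =>
        have hA' := hA (j+1) n
        simp only [Nat.add_sub_cancel, Nat.succ_sub_succ, Nat.sub_zero] at hA'
        have h3 : 2 ≤ j + 2 ∧ j + 2 ≤ N + 2 := by omega
        rw [hif1, hif1,
          show (if 1 ≤ j+2 ∧ j+2 ≤ N+1 then r (j+2-1) n * (β (n-(j+2-1)) - βs n) else 0)
            = r (j+1) n * (β (n-(j+1)) - βs n) by
            rcases Nat.lt_or_ge (N+1) (j+2) with h | h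
            · rw [if_neg (show ¬(1 ≤ j+2 ∧ j+2 ≤ N+1) by omega), hrN (j+1) n (by omega),
                zero_mul]
            · rw [if_pos (show 1 ≤ j+2 ∧ j+2 ≤ N+1 by omega)]
              norm_num,
          if_pos h3, show j + 2 - 2 = j by omega]
        by_cases hjn : j + 2 ≤ n + 1
        · have h4 : 2 ≤ j + 2 ∧ j + 2 ≤ N + 2 ∧ j + 2 ≤ n + 1 := by omega
          have h5 : 2 ≤ j + 2 ∧ j + 2 ≤ min (N+1) n + 1 := by omega
          rw [if_pos h4, if_pos h5, show j + 2 - 1 = j + 1 by omega, hA']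
          ring
        · have h4 : ¬(2 ≤ j + 2 ∧ j + 2 ≤ N + 2 ∧ j + 2 ≤ n + 1) := by omega
          have h5 : ¬(2 ≤ j + 2 ∧ j + 2 ≤ min (N+1) n + 1) := by omega
          rw [if_neg h4, if_neg h5,
            hrz (j+2) (n+1) (by omega), hrz (j+2) n (by omega),
            hrz (j+1) n (by omega), hrz j (n-1) (by omega)]
          ring
    rw [e1, e2, e3, eA]
    rw [← Finset.sum_add_distrib, ← Finset.sum_add_distrib, ← Finset.sum_sub_distrib,
      ← Finset.sum_add_distrib]
    refine Finset.sum_congr rfl (fun j hj => ?_)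
    rw [← hco j hj]
    simp only [sub_smul, add_smul]
  -- A 1 n = 0
  have hA1 : ∀ n, 1 ≤ n → A 1 n = 0 := by
    intro n hn
    rw [hA, hγs n hn]
    simp only [Nat.sub_self, Nat.add_sub_cancel, hr0]
    ring
  constructor
  · rintro ⟨⟨_, hrec⟩, hγsne⟩
    have hAzero : ∀ n, 1 ≤ n → ∀ i ∈ Finset.Icc 1 (min (N+1) n), A i n = 0 := by
      intro n hn
      exact aux_indep (n := n) hPm (Finset.Icc 1 (min (N+1) n))
        (fun i hi => by simp only [Finset.mem_Icc] at hi; omega)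
        (fun i => A i n)
        (by rw [← key n hn, hrec n hn]; ring)
    refine ⟨fun i hi => hγsne i (by simp only [Finset.mem_Icc] at hi; omega),
      fun i n h2 hN1 hin => ?_, fun h2 n hn => ?_, fun n hn => ?_⟩
    · exact hAzero n (by omega) i (by simp only [Finset.mem_Icc]; omega)
    · exact hAzero n (by omega) N (by simp only [Finset.mem_Icc]; omega)
    · exact hAzero n (by omega) (N+1) (by simp only [Finset.mem_Icc]; omega)
  · rintro ⟨ha, hb, hc, hd⟩
    have hγsall : ∀ n, 1 ≤ n → γs n ≠ 0 := by
      intro n hn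
      rcases Nat.lt_or_ge N n with h | h
      · have hd' := hd n (by omega)
        rw [hA] at hd'
        rw [hrN (N+1+1) (n+1) (by omega), hrN (N+1+1) n (by omega),
          hrN (N+1) n (by omega), Nat.add_sub_cancel] at hd'
        have heq : r N (n-1) * γs n = r N n * γ (n + 1 - (N+1)) := by
          linear_combination hd'
        intro h0
        rw [h0, mul_zero] at heq
        exact mul_ne_zero (hrNne n (by omega)) (hγ (n+1-(N+1)) (by omega)) heq.symm
      · exact ha n (by simp only [Finset.mem_Icc]; omega)
    refine ⟨⟨hbase, fun n hn => ?_⟩, hγsall⟩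
    have hsum : ∑ i ∈ Finset.Icc 1 (min (N+1) n), A i n • P (n - i) = 0 := by
      apply Finset.sum_eq_zero
      intro i hi
      simp only [Finset.mem_Icc] at hi
      have : i = 1 ∨ (2 ≤ i ∧ i ≤ N - 1) ∨ (i = N ∧ 2 ≤ N) ∨ i = N + 1 := by omega
      rcases this with rfl | h | ⟨rfl, h2⟩ | rfl
      · rw [hA1 n hn, zero_smul]
      · rw [hb i n h.1 h.2 (by omega), zero_smul]
      · rw [hc h2 n (by omega), zero_smul]
      · rw [hd n (by omega), zero_smul]
    have hk := key n hn
    rw [hsum] at hk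
    linear_combination hk
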